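/- Let δ > 1 and r > δ·(δ−1)^{(1/δ)−1}, and define H(u) = r·u^δ/(1+u^δ) for u ≥ 0. Then H has exactly two positive fixed points A < K, and they satisfy 0 < A < r(δ−1)/δ < K. Moreover, for every initial condition u₀ with 0 ≤ u₀ < A the orbit u_{t+1} = H(u_t) converges to 0, and for every initial condition u₀ > A the orbit converges to K. -/

import Mathlib

open Filter Set

private lemma fixed_of_tendsto' {H : ℝ → ℝ} {u : ℕ → ℝ} {L : ℝ}
    (hu : ∀ t, u (t + 1) = H (u t)) (hc : ContinuousAt H L)
    (hl : Tendsto u atTop (nhds L)) : H L = L := by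
  have h1 : Tendsto (fun t => u (t + 1)) atTop (nhds L) :=
    hl.comp (Filter.tendsto_add_atTop_nat 1)
  have h3 : Tendsto (fun t => H (u t)) atTop (nhds L) := by
    simpa only [hu] using h1
  exact tendsto_nhds_unique (hc.tendsto.comp hl) h3

theorem stmt_2 (r δ : ℝ) (hδ : 1 < δ) (hr : r > δ * (δ - 1) ^ (1 / δ - 1))
    (H : ℝ → ℝ) (hH : ∀ u : ℝ, H u = r * u ^ δ / (1 + u ^ δ)) :
    ∃ A K : ℝ, 0 < A ∧ A < r * (δ - 1) / δ ∧ r * (δ - 1) / δ < K ∧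
      H A = A ∧ H K = K ∧
      (∀ u : ℝ, 0 < u → H u = u → u = A ∨ u = K) ∧
      (∀ u : ℕ → ℝ, 0 ≤ u 0 → u 0 < A → (∀ t : ℕ, u (t + 1) = H (u t)) →
        Filter.Tendsto u Filter.atTop (nhds 0)) ∧
      (∀ u : ℕ → ℝ, A < u 0 → (∀ t : ℕ, u (t + 1) = H (u t)) →
        Filter.Tendsto u Filter.atTop (nhds K)) := by
  have hδ0 : (0:ℝ) < δ := by linarith
  have hδ1 : (0:ℝ) < δ - 1 := by linarith
  have hpow_pos : (0:ℝ) < (δ - 1) ^ (1 / δ - 1) := Real.rpow_pos_of_pos hδ1 _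
  have hr0 : (0:ℝ) < r := lt_trans (by positivity) hr
  set m := r * (δ - 1) / δ with hm_def
  have hm0 : 0 < m := by rw [hm_def]; positivity
  set g : ℝ → ℝ := fun u => r * u ^ (δ - 1) - u ^ δ - 1 with hg_def
  have hmul : ∀ u : ℝ, 0 < u → u * u ^ (δ - 1) = u ^ δ := fun u hu => by
    rw [show δ = 1 + (δ - 1) by ring, Real.rpow_add hu, Real.rpow_one]; ring_nf
  have hg_cont : Continuous g := by
    have h1 : Continuous fun u : ℝ => u ^ (δ - 1) :=
      continuous_iff_continuousAt.mpr fun x => Real.continuousAt_rpow_const x _ (Or.inr hδ1.le)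
    have h2 : Continuous fun u : ℝ => u ^ δ :=
      continuous_iff_continuousAt.mpr fun x => Real.continuousAt_rpow_const x _ (Or.inr hδ0.le)
    exact ((continuous_const.mul h1).sub h2).sub continuous_const
  -- sign identity
  have hHsub : ∀ u : ℝ, 0 < u → H u - u = u * g u / (1 + u ^ δ) := by
    intro u hu
    have hu' : (0:ℝ) ≤ u ^ δ := Real.rpow_nonneg hu.le _
    have hd : (0:ℝ) < 1 + u ^ δ := by linarith
    have hk := hmul u hu
    rw [hH]
    rw [show u * g u = r * u ^ δ - u * (1 + u ^ δ) from by
      simp only [hg_def]; linear_combination r * hk]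
    field_simp
  have hlt : ∀ u : ℝ, 0 < u → g u < 0 → H u < u := by
    intro u hu hg
    have hs := hHsub u hu
    have hu' : (0:ℝ) ≤ u ^ δ := Real.rpow_nonneg hu.le _
    have hd : (0:ℝ) < 1 + u ^ δ := by linarith
    have h2 : u * g u / (1 + u ^ δ) < 0 :=
      div_neg_of_neg_of_pos (mul_neg_of_pos_of_neg hu hg) hd
    linarith
  have hgt : ∀ u : ℝ, 0 < u → 0 < g u → u < H u := by
    intro u hu hg
    have hs := hHsub u hu
    have hu' : (0:ℝ) ≤ u ^ δ := Real.rpow_nonneg hu.le _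
    have hd : (0:ℝ) < 1 + u ^ δ := by linarith
    have h2 : 0 < u * g u / (1 + u ^ δ) := div_pos (mul_pos hu hg) hd
    linarith
  have hfix : ∀ u : ℝ, 0 < u → (H u = u ↔ g u = 0) := by
    intro u hu
    have hs := hHsub u hu
    have hu' : (0:ℝ) ≤ u ^ δ := Real.rpow_nonneg hu.le _
    have hd : (0:ℝ) < 1 + u ^ δ := by linarith
    constructor
    · intro h
      have h2 : u * g u / (1 + u ^ δ) = 0 := by rw [← hs, h]; ring
      have h3 : u * g u = 0 := by
        rcases div_eq_zero_iff.mp h2 with h3 | h3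
        · exact h3
        · linarith
      rcases mul_eq_zero.mp h3 with h4 | h4
      · exact absurd h4 hu.ne'
      · exact h4
    · intro h
      have : H u - u = 0 := by rw [hs, h]; ring
      linarith
  -- derivative of g
  have hg_deriv : ∀ u : ℝ, 0 < u → HasDerivAt g (δ * u ^ (δ - 2) * (m - u)) u := by
    intro u hu
    have h1 : HasDerivAt (fun x : ℝ => x ^ (δ - 1)) ((δ - 1) * u ^ (δ - 1 - 1)) u :=
      Real.hasDerivAt_rpow_const (Or.inl hu.ne')
    have h2 : HasDerivAt (fun x : ℝ => x ^ δ) (δ * u ^ (δ - 1)) u :=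
      Real.hasDerivAt_rpow_const (Or.inl hu.ne')
    have h3 : HasDerivAt g (r * ((δ - 1) * u ^ (δ - 1 - 1)) - δ * u ^ (δ - 1)) u := by
      exact ((h1.const_mul r).sub h2).sub_const 1
    have hp : u ^ (δ - 1) = u ^ (δ - 2) * u := by
      rw [show δ - 1 = (δ - 2) + 1 by ring, Real.rpow_add hu, Real.rpow_one]
    have hexp : δ - 1 - 1 = δ - 2 := by ring
    convert h3 using 1
    rw [hexp, hp, hm_def]
    field_simp
  have hg_mono : StrictMonoOn g (Icc 0 m) := by
    apply strictMonoOn_of_deriv_pos (convex_Icc 0 m) hg_cont.continuousOn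
    intro x hx
    rw [interior_Icc] at hx
    rw [(hg_deriv x hx.1).deriv]
    have h1 : 0 < x ^ (δ - 2) := Real.rpow_pos_of_pos hx.1 _
    have h2 : 0 < m - x := sub_pos.mpr hx.2
    positivity
  have hg_anti : StrictAntiOn g (Ici m) := by
    apply strictAntiOn_of_deriv_neg (convex_Ici m) hg_cont.continuousOn
    intro x hx
    rw [interior_Ici] at hx
    have hx0 : 0 < x := lt_trans hm0 hx
    rw [(hg_deriv x hx0).deriv]
    have h1 : 0 < x ^ (δ - 2) := Real.rpow_pos_of_pos hx0 _
    have h2 : m - x < 0 := sub_neg.mpr hx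
    have := mul_pos (mul_pos hδ0 h1) (neg_pos.mpr h2)
    nlinarith
  have hg0 : g 0 = -1 := by
    simp only [hg_def]
    rw [Real.zero_rpow hδ0.ne', Real.zero_rpow (by linarith : δ - 1 ≠ 0)]
    ring
  -- g m > 0
  have hgm : 0 < g m := by
    have e1 : m * m ^ (δ - 1) = m ^ δ := hmul m hm0
    have e2 : r * r ^ (δ - 1) = r ^ δ := hmul r hr0
    have e3 : δ * δ ^ (δ - 1) = δ ^ δ := hmul δ hδ0
    have e4 : m ^ (δ - 1) = r ^ (δ - 1) * (δ - 1) ^ (δ - 1) / δ ^ (δ - 1) := by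
      rw [hm_def, Real.div_rpow (by positivity) hδ0.le, Real.mul_rpow hr0.le hδ1.le]
    have key : δ ^ δ < r ^ δ * (δ - 1) ^ (δ - 1) := by
      have h3 : (δ * (δ - 1) ^ (1 / δ - 1)) ^ δ < r ^ δ :=
        Real.rpow_lt_rpow (by positivity) hr hδ0
      have h4 : (δ * (δ - 1) ^ (1 / δ - 1)) ^ δ = δ ^ δ * (δ - 1) ^ ((1 / δ - 1) * δ) := by
        rw [Real.mul_rpow hδ0.le hpow_pos.le, ← Real.rpow_mul hδ1.le]
      have h5 : (δ - 1) ^ ((1 / δ - 1) * δ) * (δ - 1) ^ (δ - 1) = 1 := by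
        rw [← Real.rpow_add hδ1]
        have : (1 / δ - 1) * δ + (δ - 1) = 0 := by field_simp; ring
        rw [this, Real.rpow_zero]
      have h6 : 0 < (δ - 1) ^ (δ - 1) := Real.rpow_pos_of_pos hδ1 _
      have h8 : δ ^ δ * (δ - 1) ^ ((1 / δ - 1) * δ) < r ^ δ := h4 ▸ h3
      calc δ ^ δ = δ ^ δ * ((δ - 1) ^ ((1 / δ - 1) * δ) * (δ - 1) ^ (δ - 1)) := by
            rw [h5]; ring
        _ = (δ ^ δ * (δ - 1) ^ ((1 / δ - 1) * δ)) * (δ - 1) ^ (δ - 1) := by ring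
        _ < r ^ δ * (δ - 1) ^ (δ - 1) := mul_lt_mul_of_pos_right h8 h6
    have hδδ1 : 0 < δ ^ (δ - 1) := Real.rpow_pos_of_pos hδ0 _
    have hrδ1 : 0 < r ^ (δ - 1) := Real.rpow_pos_of_pos hr0 _
    have hd1 : 0 < (δ - 1) ^ (δ - 1) := Real.rpow_pos_of_pos hδ1 _
    have hrm : r - m = r / δ := by rw [hm_def]; field_simp; ring
    have hstep : (1:ℝ) < m ^ (δ - 1) * (r - m) := by
      rw [hrm, e4]
      rw [div_mul_div_comm, lt_div_iff₀ (by positivity)]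
      calc (1:ℝ) * (δ ^ (δ - 1) * δ) = δ ^ δ := by rw [← e3]; ring
        _ < r ^ δ * (δ - 1) ^ (δ - 1) := key
        _ = r ^ (δ - 1) * (δ - 1) ^ (δ - 1) * r := by rw [← e2]; ring
    simp only [hg_def]
    nlinarith [hstep, e1]
  -- existence of A and K
  obtain ⟨A, hAmem, hgA⟩ : ∃ A ∈ Ioo (0:ℝ) m, g A = 0 := by
    have h := intermediate_value_Ioo hm0.le hg_cont.continuousOn
    have h0 : (0:ℝ) ∈ Ioo (g 0) (g m) := ⟨by rw [hg0]; norm_num, hgm⟩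
    obtain ⟨A, hA, hgA⟩ := h h0
    exact ⟨A, hA, hgA⟩
  obtain ⟨K, hKmem, hgK⟩ : ∃ K ∈ Ioo m (m + r), g K = 0 := by
    have hb : g (m + r) < 0 := by
      have hb0 : (0:ℝ) < m + r := by positivity
      have e := hmul (m + r) hb0
      have hp : 0 < (m + r) ^ (δ - 1) := Real.rpow_pos_of_pos hb0 _
      simp only [hg_def]
      nlinarith [e, mul_pos hm0 hp]
    have h := intermediate_value_Ioo' (by linarith : m ≤ m + r) hg_cont.continuousOn
    have h0 : (0:ℝ) ∈ Ioo (g (m + r)) (g m) := ⟨hb, hgm⟩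
    obtain ⟨K, hK, hgK⟩ := h h0
    exact ⟨K, hK, hgK⟩
  obtain ⟨hA0, hAm⟩ := hAmem
  have hKm : m < K := hKmem.1
  have hK0 : 0 < K := lt_trans hm0 hKm
  have HA : H A = A := (hfix A hA0).mpr hgA
  have HK : H K = K := (hfix K hK0).mpr hgK
  -- uniqueness
  have huniq : ∀ u : ℝ, 0 < u → H u = u → u = A ∨ u = K := by
    intro u hu hfixu
    have hgu : g u = 0 := (hfix u hu).mp hfixu
    rcases le_or_gt u m with h | h
    · exact Or.inl (hg_mono.injOn ⟨hu.le, h⟩ ⟨hA0.le, hAm.le⟩ (by rw [hgu, hgA]))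
    · exact Or.inr (hg_anti.injOn (Set.mem_Ici.mpr h.le) (Set.mem_Ici.mpr hKm.le)
        (by rw [hgu, hgK]))
  -- H monotone, nonneg, continuous
  have hHmono : ∀ a b : ℝ, 0 ≤ a → a < b → H a < H b := by
    intro a b ha hab
    have h1 : a ^ δ < b ^ δ := Real.rpow_lt_rpow ha hab hδ0
    have ha' : (0:ℝ) ≤ a ^ δ := Real.rpow_nonneg ha _
    have hb' : (0:ℝ) ≤ b ^ δ := Real.rpow_nonneg (le_trans ha hab.le) _
    rw [hH, hH, div_lt_div_iff₀ (by linarith) (by linarith)]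
    nlinarith [h1, hr0]
  have H0 : H 0 = 0 := by rw [hH, Real.zero_rpow hδ0.ne']; norm_num
  have Hnonneg : ∀ u : ℝ, 0 ≤ u → 0 ≤ H u := by
    intro u hu
    have hu' : (0:ℝ) ≤ u ^ δ := Real.rpow_nonneg hu _
    rw [hH]
    positivity
  have hHfun : H = fun u : ℝ => r * u ^ δ / (1 + u ^ δ) := funext hH
  have hHcont : ∀ L : ℝ, 0 ≤ L → ContinuousAt H L := by
    intro L hL
    have hL' : (0:ℝ) ≤ L ^ δ := Real.rpow_nonneg hL _
    rw [hHfun]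
    apply ContinuousAt.div
    · exact continuousAt_const.mul (Real.continuousAt_rpow_const L δ (Or.inr hδ0.le))
    · exact continuousAt_const.add (Real.continuousAt_rpow_const L δ (Or.inr hδ0.le))
    · intro h; linarith [h]
  -- convergence to 0
  have conv0 : ∀ u : ℕ → ℝ, 0 ≤ u 0 → u 0 < A → (∀ t : ℕ, u (t + 1) = H (u t)) →
      Tendsto u atTop (nhds 0) := by
    intro u h0 h0A hrec
    have hinv : ∀ t, 0 ≤ u t ∧ u t < A := by
      intro t; induction t with
      | zero => exact ⟨h0, h0A⟩
      | succ n ih =>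
        rw [hrec]
        refine ⟨Hnonneg _ ih.1, ?_⟩
        calc H (u n) < H A := hHmono _ _ ih.1 ih.2
          _ = A := HA
    have hdec : ∀ t, u (t + 1) ≤ u t := by
      intro t
      rcases eq_or_lt_of_le (hinv t).1 with h | h
      · rw [hrec, ← h, H0]
      · have hg : g (u t) < 0 := by
          have := hg_mono ⟨h.le, by linarith [(hinv t).2, hAm]⟩ ⟨hA0.le, hAm.le⟩ (hinv t).2
          rw [hgA] at this; exact this
        rw [hrec]; exact (hlt _ h hg).le
    have hbdd : BddBelow (Set.range u) := ⟨0, by rintro x ⟨t, rfl⟩; exact (hinv t).1⟩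
    have hconv := tendsto_atTop_ciInf (antitone_nat_of_succ_le hdec) hbdd
    set L := ⨅ t, u t with hL
    have hL0 : 0 ≤ L := le_ciInf fun t => (hinv t).1
    have hLA : L < A := lt_of_le_of_lt (ciInf_le hbdd 0) h0A
    have hLfix : H L = L := fixed_of_tendsto' hrec (hHcont L hL0) hconv
    rcases eq_or_lt_of_le hL0 with h | h
    · rwa [← h] at hconv
    · rcases huniq L h hLfix with h | h
      · exact absurd h (by linarith)
      · exact absurd h (by intro h; rw [h] at hLA; linarith)
  -- convergence to K
  have convK : ∀ u : ℕ → ℝ, A < u 0 → (∀ t : ℕ, u (t + 1) = H (u t)) →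
      Tendsto u atTop (nhds K) := by
    intro u h0 hrec
    rcases lt_trichotomy (u 0) K with hc | hc | hc
    · -- A < u 0 < K : increasing
      have hinv : ∀ t, A < u t ∧ u t < K := by
        intro t; induction t with
        | zero => exact ⟨h0, hc⟩
        | succ n ih =>
          constructor
          · rw [hrec]
            calc A = H A := HA.symm
              _ < H (u n) := hHmono _ _ hA0.le ih.1
          · rw [hrec]
            calc H (u n) < H K := hHmono _ _ (lt_trans hA0 ih.1).le ih.2
              _ = K := HK
      have hgpos : ∀ t, 0 < g (u t) := by
        intro t
        rcases le_or_gt (u t) m with h | h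
        · have := hg_mono ⟨hA0.le, hAm.le⟩ ⟨(lt_trans hA0 (hinv t).1).le, h⟩ (hinv t).1
          rw [hgA] at this; exact this
        · have := hg_anti (Set.mem_Ici.mpr h.le) (Set.mem_Ici.mpr hKm.le) (hinv t).2
          rw [hgK] at this; exact this
      have hinc : ∀ t, u t ≤ u (t + 1) := by
        intro t
        rw [hrec]; exact (hgt _ (lt_trans hA0 (hinv t).1) (hgpos t)).le
      have hbdd : BddAbove (Set.range u) := ⟨K, by rintro x ⟨t, rfl⟩; exact (hinv t).2.le⟩
      have hconv := tendsto_atTop_ciSup (monotone_nat_of_le_succ hinc) hbdd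
      set L := ⨆ t, u t with hL
      have hLlo : A < L := lt_of_lt_of_le h0 (le_ciSup hbdd 0)
      have hL0 : 0 < L := lt_trans hA0 hLlo
      have hLfix : H L = L := fixed_of_tendsto' hrec (hHcont L hL0.le) hconv
      rcases huniq L hL0 hLfix with h | h
      · exact absurd h (by intro h; rw [h] at hLlo; linarith)
      · rwa [h] at hconv
    · -- u 0 = K : constant
      have hconst : ∀ t, u t = K := by
        intro t; induction t with
        | zero => exact hc
        | succ n ih => rw [hrec, ih, HK]
      have : u = fun _ => K := funext hconst
      rw [this]; exact tendsto_const_nhds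
    · -- u 0 > K : decreasing
      have hinv : ∀ t, K < u t := by
        intro t; induction t with
        | zero => exact hc
        | succ n ih =>
          rw [hrec]
          calc K = H K := HK.symm
            _ < H (u n) := hHmono _ _ hK0.le ih
      have hgneg : ∀ t, g (u t) < 0 := by
        intro t
        have := hg_anti (Set.mem_Ici.mpr hKm.le)
          (Set.mem_Ici.mpr (by linarith [hinv t] : m ≤ u t)) (hinv t)
        rw [hgK] at this; exact this
      have hdec : ∀ t, u (t + 1) ≤ u t := by
        intro t
        rw [hrec]; exact (hlt _ (lt_trans hK0 (hinv t)) (hgneg t)).le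
      have hbdd : BddBelow (Set.range u) := ⟨K, by rintro x ⟨t, rfl⟩; exact (hinv t).le⟩
      have hconv := tendsto_atTop_ciInf (antitone_nat_of_succ_le hdec) hbdd
      set L := ⨅ t, u t with hL
      have hLK : K ≤ L := le_ciInf fun t => (hinv t).le
      have hL0 : 0 < L := lt_of_lt_of_le hK0 hLK
      have hLfix : H L = L := fixed_of_tendsto' hrec (hHcont L hL0.le) hconv
      rcases huniq L hL0 hLfix with h | h
      · exact absurd h (by intro h; rw [h] at hLK; linarith)
      · rwa [h] at hconv
  exact ⟨A, K, hA0, hAm, hKm, HA, HK, huniq, conv0, convK⟩
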